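/- Suppose sin(kn̄) = 0 with kn̄ > 0. Then as h → 0⁺, sin(h√(k²τ² + d(h)²)) = ±h²·k(τ² − n_cl²)/(2n̄) + O(h⁴(1+τ⁴)) and cos(h√(k²τ² + d(h)²)) = ±1 + O(h⁴(1+τ⁴)), where the sign is cos(kn̄) ∈ {+1, −1}, uniformly in τ ≥ 0. -/

import Mathlib

open Real

lemma aux_sin_quad (x : ℝ) (hx : 0 ≤ x) : x - Real.sin x ≤ x^2/2 := by
  have hdiff : Differentiable ℝ (fun t : ℝ => t^2/2 - t + Real.sin t) :=
    ((differentiable_id.pow 2).div_const 2 |>.sub differentiable_id).add Real.differentiable_sin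
  have key : ∀ y ∈ Set.Ici (0:ℝ), 0 ≤ deriv (fun t => t^2/2 - t + Real.sin t) y := by
    intro y hy
    simp only [Set.mem_Ici] at hy
    have H : HasDerivAt (fun t : ℝ => t^2/2 - t + Real.sin t) (y - 1 + Real.cos y) y := by
      have := (((hasDerivAt_pow 2 y).div_const 2).sub (hasDerivAt_id y)).add (Real.hasDerivAt_sin y)
      refine this.congr_deriv ?_
      simp
    rw [H.deriv]
    rcases le_or_gt y 2 with h2 | h2
    · nlinarith [Real.one_sub_sq_div_two_le_cos (x := y)]
    · nlinarith [Real.neg_one_le_cos y]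
  have hmono : MonotoneOn (fun t : ℝ => t^2/2 - t + Real.sin t) (Set.Ici 0) := by
    apply monotoneOn_of_deriv_nonneg (convex_Ici 0) hdiff.continuous.continuousOn
    · intro y hy
      exact (hdiff y).differentiableWithinAt
    · intro y hy
      exact key y (interior_subset hy)
  have := hmono (Set.self_mem_Ici) hx hx
  simp at this
  linarith

lemma aux_abs_sin_sub (x : ℝ) : |Real.sin x - x| ≤ x^2/2 := by
  rcases le_or_gt 0 x with hx | hx
  · have h1 := Real.sin_le hx
    have h2 := aux_sin_quad x hx
    rw [abs_le]; constructor <;> nlinarith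
  · have hx' : 0 ≤ -x := by linarith
    have h1 := Real.sin_le hx'
    have h2 := aux_sin_quad (-x) hx'
    rw [Real.sin_neg] at h1 h2
    rw [abs_le]; constructor <;> nlinarith

lemma aux_abs_cos_sub (x : ℝ) : |Real.cos x - 1| ≤ x^2/2 := by
  have h1 := Real.cos_le_one x
  have h2 := Real.one_sub_sq_div_two_le_cos (x := x)
  rw [abs_le]; constructor <;> nlinarith

set_option maxHeartbeats 1000000 in
theorem stmt_9 (k nbar ncl : ℝ) (hk : 0 < k) (hn : 0 < nbar) (hncl : 0 < ncl)
    (hsin : Real.sin (k * nbar) = 0) :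
    (Real.cos (k * nbar) = 1 ∨ Real.cos (k * nbar) = -1) ∧
    ∃ K > (0 : ℝ), ∃ h₀ > (0 : ℝ), ∀ h : ℝ, 0 < h → h < h₀ → ∀ τ : ℝ, 0 ≤ τ →
      |Real.sin (h * Real.sqrt (k ^ 2 * τ ^ 2 + k ^ 2 * ((nbar / h) ^ 2 - ncl ^ 2))) -
          Real.cos (k * nbar) * (h ^ 2 * k * (τ ^ 2 - ncl ^ 2) / (2 * nbar))| ≤
        K * h ^ 4 * (1 + τ ^ 4) ∧
      |Real.cos (h * Real.sqrt (k ^ 2 * τ ^ 2 + k ^ 2 * ((nbar / h) ^ 2 - ncl ^ 2))) -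
          Real.cos (k * nbar)| ≤ K * h ^ 4 * (1 + τ ^ 4) := by
  have hpyth := Real.sin_sq_add_cos_sq (k * nbar)
  have hc : Real.cos (k * nbar) = 1 ∨ Real.cos (k * nbar) = -1 := by
    have hz : (Real.cos (k*nbar) - 1) * (Real.cos (k*nbar) + 1) = 0 := by nlinarith
    rcases mul_eq_zero.mp hz with h | h
    · left; linarith
    · right; linarith
  have hcabs : |Real.cos (k * nbar)| = 1 := by
    rcases hc with h | h <;> rw [h] <;> norm_num
  refine ⟨hc, (k^2/nbar^2 + k/nbar^3) * (1 + ncl^4), by positivity,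
    nbar/(2*ncl), by positivity, ?_⟩
  intro h hh hh0 τ hτ
  have hne : h ≠ 0 := ne_of_gt hh
  set ε := h^2 * (τ^2 - ncl^2) with hεdef
  have hhncl : h * ncl < nbar / 2 := by
    rw [lt_div_iff₀ (by positivity)] at hh0
    nlinarith
  have hpos : (0:ℝ) < nbar^2 + ε := by
    have h1 : (h*ncl)^2 < (nbar/2)^2 := by
      apply sq_lt_sq' (by nlinarith) hhncl
    have h2 : 0 ≤ (h*τ)^2 := sq_nonneg _
    rw [hεdef]; nlinarith
  set S := Real.sqrt (nbar^2 + ε) with hSdef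
  have hS2 : S^2 = nbar^2 + ε := Real.sq_sqrt hpos.le
  have hS0 : 0 ≤ S := Real.sqrt_nonneg _
  have hkey : h * Real.sqrt (k^2*τ^2 + k^2*((nbar/h)^2 - ncl^2)) = k * S := by
    have hX : k^2*τ^2 + k^2*((nbar/h)^2 - ncl^2) = (k/h)^2 * (nbar^2 + ε) := by
      rw [hεdef]; field_simp; ring
    rw [hX, Real.sqrt_mul (sq_nonneg _), Real.sqrt_sq (by positivity : (0:ℝ) ≤ k/h), hSdef]
    field_simp
  have hsinS : Real.sin (k*S) = Real.cos (k*nbar) * Real.sin (k*S - k*nbar) := by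
    rw [show k*S = k*nbar + (k*S - k*nbar) by ring, Real.sin_add, hsin]; ring
  have hcosS : Real.cos (k*S) = Real.cos (k*nbar) * Real.cos (k*S - k*nbar) := by
    rw [show k*S = k*nbar + (k*S - k*nbar) by ring, Real.cos_add, hsin]; ring
  clear_value S
  clear hSdef
  set δ := k*S - k*nbar with hδdef
  have hδε : δ * (S + nbar) = k * ε := by
    have : δ * (S + nbar) = k * (S^2 - nbar^2) := by rw [hδdef]; ring
    rw [this, hS2]; ring
  clear_value δ
  have hδsq : δ^2 * nbar^2 ≤ k^2 * ε^2 := by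
    have h1 : (δ * (S + nbar))^2 = k^2 * ε^2 := by rw [hδε]; ring
    nlinarith [sq_nonneg δ, mul_nonneg (mul_nonneg (sq_nonneg δ) hS0) hn.le,
      mul_nonneg (sq_nonneg δ) (sq_nonneg S)]
  have hεsq : ε^2 ≤ 2*(1+ncl^4) * (h^4*(1+τ^4)) := by
    have h1 : (τ^2-ncl^2)^2 ≤ 2*(1+ncl^4)*(1+τ^4) := by
      nlinarith [sq_nonneg (τ*ncl), sq_nonneg (τ^2*ncl^2), sq_nonneg (τ^2+ncl^2)]
    calc ε^2 = h^4*(τ^2-ncl^2)^2 := by rw [hεdef]; ring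
      _ ≤ h^4 * (2*(1+ncl^4)*(1+τ^4)) := by
          apply mul_le_mul_of_nonneg_left h1 (by positivity)
      _ = 2*(1+ncl^4) * (h^4*(1+τ^4)) := by ring
  have hεgoal : h^2*k*(τ^2-ncl^2)/(2*nbar) = k*ε/(2*nbar) := by rw [hεdef]; ring
  clear_value ε
  have hδerr : δ - k*ε/(2*nbar) = -δ^2/(2*k*nbar) := by
    rw [eq_div_iff (by positivity : (2:ℝ)*k*nbar ≠ 0),
      show (δ - k*ε/(2*nbar)) * (2*k*nbar) = 2*k*nbar*δ - k^2*ε by field_simp]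
    linear_combination k*hδε + δ*hδdef
  have hδ2 : δ^2 ≤ k^2*ε^2/nbar^2 := by
    rw [le_div_iff₀ (by positivity : (0:ℝ) < nbar^2)]; linarith
  constructor
  · rw [hkey, hsinS, hεgoal, ← mul_sub, abs_mul, hcabs, one_mul]
    have step1 : |Real.sin δ - k*ε/(2*nbar)| ≤ δ^2/2 + δ^2/(2*k*nbar) := by
      have t1 := aux_abs_sin_sub δ
      have t2 : |δ - k*ε/(2*nbar)| = δ^2/(2*k*nbar) := by
        rw [hδerr, abs_div, abs_neg, abs_of_nonneg (sq_nonneg δ),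
          abs_of_pos (by positivity : (0:ℝ) < 2*k*nbar)]
      calc |Real.sin δ - k*ε/(2*nbar)|
          ≤ |Real.sin δ - δ| + |δ - k*ε/(2*nbar)| := abs_sub_le _ _ _
        _ ≤ δ^2/2 + δ^2/(2*k*nbar) := by rw [t2]; linarith
    refine step1.trans ?_
    rw [div_add_div _ _ (by norm_num : (2:ℝ) ≠ 0) (by positivity : (2:ℝ)*k*nbar ≠ 0)]
    rw [div_le_iff₀ (by positivity : (0:ℝ) < 2*(2*k*nbar))]
    have expand : (k^2/nbar^2 + k/nbar^3) * (1 + ncl^4) * h^4 * (1+τ^4) * (2*(2*k*nbar))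
        = (2*(1+ncl^4)*(h^4*(1+τ^4))) * ((2*k^3*nbar + 2*k^2) / nbar^2) := by
      field_simp
    rw [expand]
    calc δ^2*(2*k*nbar) + 2*δ^2 = δ^2 * (2*k*nbar + 2) := by ring
      _ ≤ (k^2*ε^2/nbar^2) * (2*k*nbar + 2) := by
          apply mul_le_mul_of_nonneg_right hδ2 (by positivity)
      _ = ε^2 * ((2*k^3*nbar + 2*k^2)/nbar^2) := by ring
      _ ≤ (2*(1+ncl^4)*(h^4*(1+τ^4))) * ((2*k^3*nbar + 2*k^2)/nbar^2) := by
          apply mul_le_mul_of_nonneg_right hεsq (by positivity)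
  · rw [hkey, hcosS, show Real.cos (k*nbar) * Real.cos δ - Real.cos (k*nbar)
        = Real.cos (k*nbar) * (Real.cos δ - 1) by ring, abs_mul, hcabs, one_mul]
    refine (aux_abs_cos_sub δ).trans ?_
    calc δ^2/2 ≤ (k^2*ε^2/nbar^2)/2 := by linarith
      _ = ε^2 * (k^2/(2*nbar^2)) := by ring
      _ ≤ (2*(1+ncl^4)*(h^4*(1+τ^4))) * (k^2/(2*nbar^2)) := by
          apply mul_le_mul_of_nonneg_right hεsq (by positivity)
      _ = k^2/nbar^2 * (1+ncl^4) * h^4 * (1+τ^4) := by ring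
      _ ≤ (k^2/nbar^2 + k/nbar^3) * (1 + ncl^4) * h^4 * (1+τ^4) := by
          have hp : (0:ℝ) < k/nbar^3 := by positivity
          have := mul_le_mul_of_nonneg_right (mul_le_mul_of_nonneg_right
            (mul_le_mul_of_nonneg_right (le_of_lt (by linarith : k^2/nbar^2 < k^2/nbar^2 + k/nbar^3))
              (by positivity : (0:ℝ) ≤ 1+ncl^4)) (by positivity : (0:ℝ) ≤ h^4))
            (by positivity : (0:ℝ) ≤ 1+τ^4)
          linarith
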